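/- Let c and x be real numbers with c ≥ 1 and x ≥ 4, and let k = c · logb 2 x / logb 2 (logb 2 x). Assume 1 ≤ k and k ≤ x. Then k^(4k+2) ≤ x^(4c · logb 2 c + 4c + 2), where both sides use real exponentiation. -/

import Mathlib

open Real

/-- `k^(4k+2) ≤ x^(4c·log₂ c + 4c + 2)` for
`k = c·log₂ x / log₂ log₂ x`, when `c ≥ 1`, `x ≥ 4`, `1 ≤ k ≤ x`. -/
theorem k_pow_4k_add_2_le
    (c x : ℝ) (hc : 1 ≤ c) (hx : 4 ≤ x)
    (k : ℝ) (hk : k = c * logb 2 x / logb 2 (logb 2 x))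
    (hk1 : 1 ≤ k) (hkx : k ≤ x) :
    k ^ (4 * k + 2) ≤ x ^ (4 * c * logb 2 c + 4 * c + 2) := by
  have hx0 : (0 : ℝ) < x := by linarith
  have hk0 : (0 : ℝ) < k := by linarith
  have hc0 : (0 : ℝ) < c := by linarith
  set L := logb 2 x with hL
  set LL := logb 2 L with hLL
  have hL2 : 2 ≤ L := by
    have h4 : logb 2 4 ≤ L := Real.logb_le_logb_of_le (b := 2) (by norm_num) (by norm_num) hx
    have : logb 2 4 = 2 := by
      rw [show (4:ℝ) = 2 ^ (2:ℝ) by norm_num [Real.rpow_natCast]]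
      exact Real.logb_rpow (by norm_num) (by norm_num)
    linarith
  have hLL1 : 1 ≤ LL := by
    have := Real.logb_le_logb_of_le (b := 2) (by norm_num) (by norm_num) hL2
    simpa using this
  have hLLL0 : 0 ≤ logb 2 LL := Real.logb_nonneg one_lt_two hLL1
  have hlbc : 0 ≤ logb 2 c := Real.logb_nonneg one_lt_two hc
  have hL0 : (0:ℝ) < L := by linarith
  have hLL0 : (0:ℝ) < LL := by linarith
  have hlbk : logb 2 k = logb 2 c + LL - logb 2 LL := by
    rw [hk, Real.logb_div (by positivity) (by positivity),
      Real.logb_mul (by positivity) (by positivity)]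
  have hkLL : k * LL = c * L := by
    rw [hk]; field_simp
  have hkcL : k ≤ c * L := by
    rw [hk]
    exact div_le_self (by positivity) hLL1
  have hlbkL : logb 2 k ≤ L := Real.logb_le_logb_of_le (b := 2) (by norm_num) hk0 hkx
  have hklbc : k * logb 2 c ≤ c * L * logb 2 c :=
    mul_le_mul_of_nonneg_right hkcL hlbc
  have key : logb 2 k * (4 * k + 2) ≤ L * (4 * c * logb 2 c + 4 * c + 2) := by
    nlinarith [hk0.le, hLLL0, hkLL, hklbc, hlbkL, hlbk, hkcL]
  have hlog2 : (0:ℝ) < Real.log 2 := Real.log_pos one_lt_two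
  rw [Real.rpow_def_of_pos hk0, Real.rpow_def_of_pos hx0]
  apply Real.exp_le_exp.mpr
  have e1 : Real.log k = logb 2 k * Real.log 2 := by
    field_simp [Real.logb]
    rw [Real.logb, div_mul_cancel₀ _ hlog2.ne']
  have e2 : Real.log x = L * Real.log 2 := by
    rw [hL]; field_simp [Real.logb]
    rw [Real.logb, div_mul_cancel₀ _ hlog2.ne']
  rw [e1, e2]
  nlinarith [key]
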